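/- Let v_1, ..., v_k be unit vectors in ℝ^d that are equiangular with common angle β, and suppose β < 1. Then k ≤ d(d+1)/2. -/

import Mathlib

open Matrix

/-- At most d(d+1)/2 real equiangular unit vectors with common angle β < 1. -/
theorem equiangular_lines_card_le
    {d k : ℕ} (v : Fin k → (Fin d → ℝ)) (β : ℝ)
    (hunit : ∀ i, v i ⬝ᵥ v i = 1)
    (hang : ∀ i j, i ≠ j → |v i ⬝ᵥ v j| = β)
    (hβ : β < 1) :
    k ≤ d * (d + 1) / 2 := by
  rcases Nat.lt_or_ge k 2 with hk | hk
  · -- k ≤ 1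
    rcases Nat.eq_zero_or_pos k with hk0 | hk1
    · omega
    · -- k = 1, so d ≥ 1
      have hd : 1 ≤ d := by
        by_contra hd
        have hd0 : d = 0 := by omega
        have := hunit ⟨0, hk1⟩
        subst hd0
        simp [dotProduct] at this
      have : 1 * 2 / 2 ≤ d * (d + 1) / 2 :=
        Nat.div_le_div_right (Nat.mul_le_mul hd (by omega))
      omega
  · have hβ0 : 0 ≤ β := by
      have := hang ⟨0, by omega⟩ ⟨1, by omega⟩ (by simp [Fin.ext_iff])
      rw [← this]; exact abs_nonneg _
    have hβ2 : β ^ 2 < 1 := by nlinarith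
    set f : Fin k → Sym2 (Fin d) → ℝ :=
      fun i => Sym2.lift ⟨fun a b => v i a * v i b, fun a b => mul_comm _ _⟩ with hf
    have hli : LinearIndependent ℝ f := by
      rw [Fintype.linearIndependent_iff]
      intro c hc j
      have h : ∀ a b : Fin d, ∑ i, c i * (v i a * v i b) = 0 := by
        intro a b
        have := congrFun hc s(a, b)
        simpa [hf, Finset.sum_apply] using this
      have hdot : ∀ j : Fin k, ∑ i, c i * (v i ⬝ᵥ v j) ^ 2 = 0 := by
        intro j
        have e1 : ∀ i : Fin k, c i * (v i ⬝ᵥ v j) ^ 2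
            = ∑ a, ∑ b, v j a * v j b * (c i * (v i a * v i b)) := by
          intro i
          rw [dotProduct, sq, Finset.sum_mul_sum]
          rw [Finset.mul_sum]
          refine Finset.sum_congr rfl fun a _ => ?_
          rw [Finset.mul_sum]
          refine Finset.sum_congr rfl fun b _ => ?_
          ring
        calc ∑ i, c i * (v i ⬝ᵥ v j) ^ 2
            = ∑ i, ∑ a, ∑ b, v j a * v j b * (c i * (v i a * v i b)) :=
              Finset.sum_congr rfl fun i _ => e1 i
          _ = ∑ a, ∑ b, ∑ i, v j a * v j b * (c i * (v i a * v i b)) := by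
              rw [Finset.sum_comm]
              exact Finset.sum_congr rfl fun a _ => Finset.sum_comm
          _ = 0 := by
              refine Finset.sum_eq_zero fun a _ => Finset.sum_eq_zero fun b _ => ?_
              rw [← Finset.mul_sum, h a b, mul_zero]
      set S := ∑ i, c i with hS
      have key : ∀ j : Fin k, c j * (1 - β ^ 2) + β ^ 2 * S = 0 := by
        intro j
        have e2 : ∀ i : Fin k, c i * (v i ⬝ᵥ v j) ^ 2
            = c i * β ^ 2 + (if i = j then c i * (1 - β ^ 2) else 0) := by
          intro i
          by_cases hij : i = j
          · subst hij; rw [hunit i]; simp; ring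
          · rw [if_neg hij]
            have : (v i ⬝ᵥ v j) ^ 2 = β ^ 2 := by
              rw [← sq_abs, hang i j hij]
            rw [this]; ring
        have := hdot j
        rw [Finset.sum_congr rfl fun i _ => e2 i, Finset.sum_add_distrib,
          Finset.sum_ite_eq' Finset.univ j (fun i => c i * (1 - β ^ 2)),
          if_pos (Finset.mem_univ j), ← Finset.sum_mul] at this
        linarith [this]
      have hSsum : S * (1 - β ^ 2) + (k : ℝ) * (β ^ 2 * S) = 0 := by
        have := Finset.sum_congr rfl fun j (_ : j ∈ Finset.univ) => key j
        rw [Finset.sum_const, Finset.sum_add_distrib, ← Finset.sum_mul] at this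
        simpa [← hS, nsmul_eq_mul] using this
      have hS0 : S = 0 := by
        have hkpos : (2 : ℝ) ≤ (k : ℝ) := by exact_mod_cast hk
        have h2 : S * (1 + ((k : ℝ) - 1) * β ^ 2) = 0 := by linear_combination hSsum
        have h3 : 0 < 1 + ((k : ℝ) - 1) * β ^ 2 := by nlinarith [sq_nonneg β]
        rcases mul_eq_zero.mp h2 with h | h
        · exact h
        · linarith
      have := key j
      rw [hS0] at this
      have h1 : (1 : ℝ) - β ^ 2 > 0 := by linarith
      nlinarith [this]
    have hcard := hli.fintype_card_le_finrank
    rw [Module.finrank_pi] at hcard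
    simpa [Sym2.card, Nat.choose_two_right, Fintype.card_fin, Nat.succ_sub_one,
      Nat.mul_comm] using hcard
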